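/- Let M = 2^m and N = 2^n with n ≤ m, and let d ∈ {0,...,M/N−1}. Given a block of N complex numbers x[0],...,x[N−1], define the frequency vector X of length M by setting X[d + i·(M/N)] = (DFT_N x)[i] for i = 0,...,N−1 and X[k] = 0 for all other k. Then the M-point inverse DFT of X satisfies x'[ℓ] = (N/M)·e^{2πiℓd/M}·x[ℓ mod N] for every ℓ ∈ {0,...,M−1}. -/

import Mathlib

open Complex Finset

/-- `dft N x k = Σ_{j<N} x j · e^{-2πi k j / N}` -/
noncomputable def dft (N : ℕ) (x : ℕ → ℂ) (k : ℕ) : ℂ :=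
  ∑ j ∈ Finset.range N, x j * Complex.exp (-2 * Real.pi * Complex.I * k * j / N)

/-- `idft M X ℓ = (1/M) Σ_{k<M} X k · e^{2πi k ℓ / M}` -/
noncomputable def idft (M : ℕ) (X : ℕ → ℂ) (ℓ : ℕ) : ℂ :=
  (1 / (M : ℂ)) * ∑ k ∈ Finset.range M, X k * Complex.exp (2 * Real.pi * Complex.I * k * ℓ / M)

lemma orth (N : ℕ) (hN : 0 < N) (t : ℤ) :
    ∑ i ∈ Finset.range N, Complex.exp (2 * Real.pi * Complex.I * t * i / N) =
    if (N:ℤ) ∣ t then (N:ℂ) else 0 := by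
  have hNc : (N:ℂ) ≠ 0 := Nat.cast_ne_zero.mpr hN.ne'
  have hpi : (2:ℂ) * Real.pi * Complex.I ≠ 0 := by
    simp [Real.pi_ne_zero, Complex.I_ne_zero]
  have hterm : ∀ i : ℕ, Complex.exp (2 * Real.pi * Complex.I * t * i / N) =
      Complex.exp (2 * Real.pi * Complex.I * t / N) ^ i := by
    intro i
    rw [← Complex.exp_nat_mul]
    ring_nf
  split_ifs with h
  · obtain ⟨c, rfl⟩ := h
    have key : ∀ i ∈ Finset.range N,
        Complex.exp (2 * Real.pi * Complex.I * (((N:ℤ)*c : ℤ) : ℂ) * i / N) = 1 := by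
      intro i _
      have harg : (2 : ℂ) * Real.pi * Complex.I * (((N:ℤ)*c : ℤ) : ℂ) * i / N
          = ((c * i : ℤ)) * (2 * Real.pi * Complex.I) := by
        push_cast
        field_simp
      rw [harg, Complex.exp_int_mul_two_pi_mul_I]
    rw [Finset.sum_congr rfl key]
    simp
  · rw [Finset.sum_congr rfl (fun i _ => hterm i)]
    have hw1 : Complex.exp (2 * Real.pi * Complex.I * t / N) ≠ 1 := by
      intro hw
      rcases Complex.exp_eq_one_iff.mp hw with ⟨k, hk⟩
      apply h
      refine ⟨k, ?_⟩
      have h2 : (t : ℂ) = N * k := by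
        field_simp at hk
        have h3 : (2*(Real.pi:ℂ)*Complex.I) * t = (2*(Real.pi:ℂ)*Complex.I) * (N*k) := by
          linear_combination (2*(Real.pi:ℂ)*Complex.I) * hk
        exact mul_left_cancel₀ hpi h3
      exact_mod_cast h2
    rw [geom_sum_eq hw1]
    have hwN : Complex.exp (2 * Real.pi * Complex.I * t / N) ^ N = 1 := by
      rw [← Complex.exp_nat_mul]
      have harg : (N:ℂ) * (2 * Real.pi * Complex.I * t / N) = (t:ℤ) * (2 * Real.pi * Complex.I) := by
        field_simp
      rw [harg, Complex.exp_int_mul_two_pi_mul_I]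
    rw [hwN]
    simp

theorem stmt0 (m n : ℕ) (hnm : n ≤ m) (d : ℕ) (hd : d < 2 ^ (m - n)) (x : ℕ → ℂ)
    (X : ℕ → ℂ)
    (hX : ∀ k < 2 ^ m, X k =
      if k % 2 ^ (m - n) = d then dft (2 ^ n) x (k / 2 ^ (m - n)) else 0) :
    ∀ ℓ < 2 ^ m,
      idft (2 ^ m) X ℓ =
        ((2 ^ n : ℂ) / (2 ^ m : ℂ)) *
          Complex.exp (2 * Real.pi * Complex.I * ℓ * d / (2 ^ m : ℕ)) *
          x (ℓ % 2 ^ n) := by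
  intro ℓ hℓ
  set N := 2 ^ n with hNdef
  set Q := 2 ^ (m - n) with hQdef
  set M := 2 ^ m with hMdef
  have hQpos : 0 < Q := Nat.pow_pos (by norm_num)
  have hNpos : 0 < N := Nat.pow_pos (by norm_num)
  have hMpos : 0 < M := Nat.pow_pos (by norm_num)
  have hMNQ : M = N * Q := by
    rw [hMdef, hNdef, hQdef, ← pow_add, Nat.add_sub_cancel' hnm]
  have hNc : (N:ℂ) ≠ 0 := Nat.cast_ne_zero.mpr hNpos.ne'
  have hQc : (Q:ℂ) ≠ 0 := Nat.cast_ne_zero.mpr hQpos.ne'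
  have hMc : (M:ℂ) ≠ 0 := Nat.cast_ne_zero.mpr hMpos.ne'
  set f : ℕ → ℂ := fun k => dft N x (k / Q) * Complex.exp (2 * Real.pi * Complex.I * k * ℓ / M)
    with hf
  rw [idft]
  have h1 : ∑ k ∈ Finset.range M, X k * Complex.exp (2 * Real.pi * Complex.I * k * ℓ / M)
      = ∑ k ∈ Finset.range M, (if k % Q = d then f k else 0) := by
    refine Finset.sum_congr rfl fun k hk => ?_
    rw [hX k (Finset.mem_range.mp hk)]
    split_ifs <;> simp [hf]
  rw [h1]
  have h2 : ∑ k ∈ Finset.range M, (if k % Q = d then f k else 0)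
      = ∑ i ∈ Finset.range N, f (d + i * Q) := by
    rw [← Finset.sum_filter]
    refine Finset.sum_bij' (fun k _ => k / Q) (fun i _ => d + i * Q) ?_ ?_ ?_ ?_ ?_
    · intro k hk
      simp only [Finset.mem_filter, Finset.mem_range] at hk
      rw [Finset.mem_range]
      exact Nat.div_lt_of_lt_mul (by rw [Nat.mul_comm, ← hMNQ]; exact hk.1)
    · intro i hi
      simp only [Finset.mem_range] at hi
      simp only [Finset.mem_filter, Finset.mem_range]
      constructor
      · calc d + i * Q < Q + i * Q := by omega
          _ = (i + 1) * Q := by ring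
          _ ≤ N * Q := Nat.mul_le_mul_right _ hi
          _ = M := hMNQ.symm
      · rw [Nat.add_mul_mod_self_right, Nat.mod_eq_of_lt hd]
    · intro k hk
      simp only [Finset.mem_filter, Finset.mem_range] at hk
      show d + k / Q * Q = k
      have h := Nat.mod_add_div' k Q
      rw [hk.2] at h
      exact h
    · intro i hi
      show (d + i * Q) / Q = i
      rw [Nat.add_mul_div_right _ _ hQpos, Nat.div_eq_of_lt hd, Nat.zero_add]
    · intro k hk
      simp only [Finset.mem_filter, Finset.mem_range] at hk
      have h : d + k / Q * Q = k := by
        have h := Nat.mod_add_div' k Q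
        rw [hk.2] at h
        exact h
      show f k = f (d + k / Q * Q)
      rw [h]
  rw [h2]
  have h3 : ∀ i ∈ Finset.range N, f (d + i * Q)
      = ∑ j ∈ Finset.range N, x j * (Complex.exp (2 * Real.pi * Complex.I * ℓ * d / M)
          * Complex.exp (2 * Real.pi * Complex.I * (((ℓ : ℤ) - (j : ℤ)) : ℂ) * i / N)) := by
    intro i hi
    have hdiv : (d + i * Q) / Q = i := by
      rw [Nat.add_mul_div_right _ _ hQpos, Nat.div_eq_of_lt hd, Nat.zero_add]
    rw [hf]
    simp only [hdiv]
    rw [dft, Finset.sum_mul]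
    refine Finset.sum_congr rfl fun j hj => ?_
    rw [mul_assoc]
    congr 1
    rw [← Complex.exp_add, ← Complex.exp_add]
    congr 1
    have hMc' : (M:ℂ) = N * Q := by exact_mod_cast congrArg (Nat.cast : ℕ → ℂ) hMNQ
    rw [hMc']
    push_cast
    field_simp
    ring
  rw [Finset.sum_congr rfl h3, Finset.sum_comm]
  have h4 : ∀ j ∈ Finset.range N,
      ∑ i ∈ Finset.range N, x j * (Complex.exp (2 * Real.pi * Complex.I * ℓ * d / M)
          * Complex.exp (2 * Real.pi * Complex.I * (((ℓ : ℤ) - (j : ℤ)) : ℂ) * i / N))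
      = x j * Complex.exp (2 * Real.pi * Complex.I * ℓ * d / M) *
          (if (N:ℤ) ∣ ((ℓ:ℤ) - j) then (N:ℂ) else 0) := by
    intro j hj
    have ho := orth N hNpos ((ℓ:ℤ) - j)
    push_cast at ho
    simp_rw [← mul_assoc]
    rw [← Finset.mul_sum]
    push_cast
    rw [ho]
  rw [Finset.sum_congr rfl h4]
  have hdvd : ∀ j < N, ((N:ℤ) ∣ ((ℓ:ℤ) - j) ↔ j = ℓ % N) := by
    intro j hj
    constructor
    · intro hdv
      have h1 : (j:ℤ) % N = (ℓ:ℤ) % N := Int.modEq_iff_dvd.mpr hdv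
      have h2 : (j:ℤ) % N = j := Int.emod_eq_of_lt (by positivity) (by exact_mod_cast hj)
      have h3 : ((ℓ % N : ℕ):ℤ) = (ℓ:ℤ) % N := by push_cast; ring
      have : (j:ℤ) = ((ℓ % N : ℕ):ℤ) := by rw [h3, ← h1, h2]
      exact_mod_cast this
    · rintro rfl
      refine ⟨(ℓ / N : ℕ), ?_⟩
      have h : (ℓ:ℤ) = N * (ℓ/N : ℕ) + (ℓ % N : ℕ) := by
        exact_mod_cast (Nat.div_add_mod ℓ N).symm
      linarith
  have h5 : ∑ j ∈ Finset.range N,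
      (x j * Complex.exp (2 * Real.pi * Complex.I * ℓ * d / M) *
        (if (N:ℤ) ∣ ((ℓ:ℤ) - j) then (N:ℂ) else 0))
      = x (ℓ % N) * Complex.exp (2 * Real.pi * Complex.I * ℓ * d / M) * N := by
    rw [Finset.sum_eq_single (ℓ % N)]
    · rw [if_pos]
      exact (hdvd _ (Nat.mod_lt _ hNpos)).mpr rfl
    · intro j hj hne
      rw [if_neg, mul_zero]
      intro hcon
      exact hne ((hdvd j (Finset.mem_range.mp hj)).mp hcon)
    · intro hcon
      exact absurd (Finset.mem_range.mpr (Nat.mod_lt _ hNpos)) hcon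
  rw [h5, hMdef, hNdef]
  push_cast
  ring
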